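/- If z is a fusible number with maximum representation height n, then the smallest fusible number greater than z is z + 2^(-(n+1)), and its maximum representation height is n + 1. -/

import Mathlib

/-- The set of fusible numbers. -/
inductive Fusible : ℝ → Prop
  | zero : Fusible 0
  | fuse (x y : ℝ) : Fusible x → Fusible y → |y - x| < 1 → Fusible ((x + y + 1) / 2)

/-- Full binary trees, used as representations of fusible numbers. -/
inductive RepTree where
  | leaf : RepTree
  | node (l r : RepTree) : RepTree

/-- The value of a representation: leaves are `0`, internal nodes fuse their children. -/
noncomputable def RepTree.val : RepTree → ℝ
  | .leaf => 0
  | .node l r => (l.val + r.val + 1) / 2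

/-- Validity of a representation: at every internal node, the children differ by less than 1. -/
def RepTree.Valid : RepTree → Prop
  | .leaf => True
  | .node l r => l.Valid ∧ r.Valid ∧ |r.val - l.val| < 1

/-- The height of a representation: length of the longest root-to-leaf path. -/
def RepTree.height : RepTree → ℕ
  | .leaf => 0
  | .node l r => max l.height r.height + 1

/-- `IsExp r n` means that the dyadic rational `r` has exponent `n`, i.e. `n` is the least
natural number such that `r = p / 2 ^ n` for an integer `p` (so that `p` is odd when `n ≥ 1`). -/
def IsExp (r : ℝ) (n : ℕ) : Prop :=
  (∃ p : ℤ, r = (p : ℝ) / 2 ^ n) ∧ ∀ m : ℕ, m < n → ¬ ∃ p : ℤ, r = (p : ℝ) / 2 ^ m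

/-- `HMaxIs z n` means that the maximum height over all representations of `z` is `n`. -/
def HMaxIs (z : ℝ) (n : ℕ) : Prop :=
  (∃ T : RepTree, T.Valid ∧ T.val = z ∧ T.height = n) ∧
  ∀ T : RepTree, T.Valid → T.val = z → T.height ≤ n

/-- `z` is a limit fusible number: it is the supremum of the smaller fusible numbers. -/
def IsLimitFusible (z : ℝ) : Prop :=
  IsLUB {w : ℝ | Fusible w ∧ w < z} z

namespace Fus

open Set RepTree

/-! ### Basic facts about fusible numbers and trees -/

theorem fusible_nonneg {x : ℝ} (h : Fusible x) : 0 ≤ x := by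
  induction h with
  | zero => exact le_refl _
  | fuse a b _ _ _ iha ihb => linarith

theorem fusible_zero_or_half_le {x : ℝ} (h : Fusible x) : x = 0 ∨ (1:ℝ)/2 ≤ x := by
  induction h with
  | zero => exact Or.inl rfl
  | fuse a b ha hb _ _ _ =>
    right
    have := fusible_nonneg ha
    have := fusible_nonneg hb
    linarith

theorem fusible_half_le {x : ℝ} (h : Fusible x) (hx : x ≠ 0) : (1:ℝ)/2 ≤ x :=
  (fusible_zero_or_half_le h).resolve_left hx

theorem fusible_half_le' {x : ℝ} (h : Fusible x) (hx : 0 < x) : (1:ℝ)/2 ≤ x :=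
  fusible_half_le h (by linarith)

theorem Fusible.add_half {x : ℝ} (h : Fusible x) : Fusible (x + 1/2) := by
  have := Fusible.fuse x x h h (by simp)
  have e : (x + x + 1)/2 = x + 1/2 := by ring
  rwa [e] at this

theorem Fusible.add_one {x : ℝ} (h : Fusible x) : Fusible (x + 1) := by
  have h2 := (Fus.Fusible.add_half (Fus.Fusible.add_half h))
  have e : x + 1/2 + 1/2 = x + 1 := by ring
  rwa [e] at h2

theorem val_nonneg : ∀ t : RepTree, 0 ≤ t.val := by
  intro t
  induction t with
  | leaf => simp [RepTree.val]
  | node l r ihl ihr => simp only [RepTree.val]; linarith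

theorem node_val_half_le (l r : RepTree) : (1:ℝ)/2 ≤ (node l r).val := by
  have := val_nonneg l; have := val_nonneg r
  simp only [RepTree.val]; linarith

theorem fusible_val : ∀ {t : RepTree}, t.Valid → Fusible t.val := by
  intro t
  induction t with
  | leaf => intro _; exact Fusible.zero
  | node l r ihl ihr =>
    intro hv
    obtain ⟨h1, h2, h3⟩ := hv
    exact Fusible.fuse _ _ (ihl h1) (ihr h2) h3

theorem exists_tree {z : ℝ} (h : Fusible z) : ∃ t : RepTree, t.Valid ∧ t.val = z := by
  induction h with
  | zero => exact ⟨leaf, trivial, rfl⟩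
  | fuse a b ha hb hab iha ihb =>
    obtain ⟨ta, hta, hva⟩ := iha
    obtain ⟨tb, htb, hvb⟩ := ihb
    exact ⟨node ta tb, ⟨hta, htb, by rw [hva, hvb]; exact hab⟩, by simp [RepTree.val, hva, hvb]⟩

theorem eq_leaf_of_val_eq_zero : ∀ {t : RepTree}, t.val = 0 → t = leaf := by
  intro t h
  cases t with
  | leaf => rfl
  | node l r => exact absurd h (by have := node_val_half_le l r; intro e; rw [e] at this; norm_num at this)

/-- children values are smaller than the node value (under validity). -/
theorem left_val_lt {l r : RepTree} (h : (node l r).Valid) : l.val < (node l r).val := by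
  obtain ⟨-, -, h3⟩ := h
  have := abs_lt.1 h3
  simp only [RepTree.val]; cases this; linarith

theorem right_val_lt {l r : RepTree} (h : (node l r).Valid) : r.val < (node l r).val := by
  obtain ⟨-, -, h3⟩ := h
  have := abs_lt.1 h3
  simp only [RepTree.val]; cases this; linarith

/-! ### Dyadic granularity -/

/-- `x` is an integer multiple of `2⁻ⁿ`. -/
def Dy (n : ℕ) (x : ℝ) : Prop := ∃ m : ℤ, x * 2 ^ n = (m : ℝ)

theorem Dy.mono {n N : ℕ} {x : ℝ} (h : Dy n x) (hnN : n ≤ N) : Dy N x := by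
  obtain ⟨m, hm⟩ := h
  refine ⟨m * 2 ^ (N - n), ?_⟩
  have : (2:ℝ) ^ N = 2 ^ n * 2 ^ (N - n) := by
    rw [← pow_add]; congr 1; omega
  push_cast
  rw [this, ← mul_assoc, hm]

theorem Dy.add {n : ℕ} {x y : ℝ} (hx : Dy n x) (hy : Dy n y) : Dy n (x + y) := by
  obtain ⟨a, ha⟩ := hx; obtain ⟨b, hb⟩ := hy
  exact ⟨a + b, by push_cast [add_mul, ha, hb]; ring⟩

theorem Dy.sub {n : ℕ} {x y : ℝ} (hx : Dy n x) (hy : Dy n y) : Dy n (x - y) := by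
  obtain ⟨a, ha⟩ := hx; obtain ⟨b, hb⟩ := hy
  exact ⟨a - b, by push_cast [sub_mul, ha, hb]; ring⟩

theorem Dy.one {n : ℕ} : Dy n (1 : ℝ) := ⟨2 ^ n, by push_cast; simp⟩

theorem Dy.zero {n : ℕ} : Dy n (0 : ℝ) := ⟨0, by simp⟩

theorem dy_two_pow_inv {n : ℕ} : Dy n ((2 ^ n : ℝ)⁻¹) := ⟨1, by
  push_cast
  rw [inv_mul_cancel₀ (by positivity)]⟩

/-- key gap principle : two distinct multiples of `2⁻ⁿ` differ by at least `2⁻ⁿ`. -/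
theorem Dy.gap {n : ℕ} {x y : ℝ} (hx : Dy n x) (hy : Dy n y) (hxy : x < y) :
    x + (2 ^ n : ℝ)⁻¹ ≤ y := by
  obtain ⟨a, ha⟩ := hx; obtain ⟨b, hb⟩ := hy
  have h2 : (0:ℝ) < 2 ^ n := by positivity
  have hab : (a : ℝ) < b := by
    rw [← ha, ← hb]; exact (mul_lt_mul_iff_of_pos_right h2).2 hxy
  have hab' : a + 1 ≤ b := by exact_mod_cast hab
  have : (a : ℝ) + 1 ≤ (b : ℝ) := by exact_mod_cast hab'
  have hx2 : (x + (2 ^ n : ℝ)⁻¹) * 2 ^ n = (a:ℝ) + 1 := by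
    field_simp
    linarith [ha]
  have : (x + (2 ^ n : ℝ)⁻¹) * 2 ^ n ≤ y * 2 ^ n := by rw [hx2, hb]; exact this
  exact le_of_mul_le_mul_right this h2

theorem Dy.nonneg_of_pos {n : ℕ} {x : ℝ} (hx : Dy n x) (h : 0 < x) : (2 ^ n : ℝ)⁻¹ ≤ x := by
  have := Dy.gap (Dy.zero (n := n)) hx h
  simpa using this

theorem val_dy : ∀ t : RepTree, Dy t.height t.val := by
  intro t
  induction t with
  | leaf => exact Dy.zero
  | node l r ihl ihr =>
    have hl : Dy (max l.height r.height) l.val := ihl.mono (le_max_left _ _)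
    have hr : Dy (max l.height r.height) r.val := ihr.mono (le_max_right _ _)
    obtain ⟨a, ha⟩ := hl; obtain ⟨b, hb⟩ := hr
    refine ⟨a + b + 2 ^ (max l.height r.height), ?_⟩
    simp only [RepTree.val, RepTree.height]
    have : (2:ℝ) ^ (max l.height r.height + 1) = 2 ^ (max l.height r.height) * 2 := by ring
    rw [this]
    push_cast
    rw [← ha, ← hb]
    ring

end Fus
open RepTree
section WO

variable (q : ℝ)

/-- chains witnessing membership in the strip `(q, q+1/4]` with bounded unfolding depth. -/
def FChain : ℕ → ℝ → Prop
  | 0, _ => False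
  | (j+1), z => ∃ a b : ℝ, Fusible a ∧ Fusible b ∧ a ≤ q ∧ |b - a| < 1 ∧ z = (a + b + 1)/2 ∧
      (b ≤ q ∨ FChain j b)

theorem fchain_mono : ∀ {j : ℕ} {z : ℝ}, FChain q j z → FChain q (j+1) z := by
  intro j
  induction j with
  | zero => intro z h; exact absurd h (by simp [FChain])
  | succ j ih =>
    intro z h
    obtain ⟨a, b, h1, h2, h3, h4, h5, h6⟩ := h
    exact ⟨a, b, h1, h2, h3, h4, h5, h6.imp id (fun hc => ih hc)⟩

theorem fchain_exists (hq : 0 ≤ q) :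
    ∀ t : RepTree, t.Valid → q < t.val → t.val ≤ q + 4⁻¹ → ∃ j, FChain q j t.val := by
  intro t
  induction t with
  | leaf =>
    intro _ h1 _
    simp only [RepTree.val] at h1
    linarith
  | node l r ihl ihr =>
    intro hv h1 h2
    obtain ⟨hvl, hvr, hlr⟩ := hv
    have hone : ¬ (q < l.val ∧ q < r.val) := by
      rintro ⟨ha, hb⟩
      have : (node l r).val > q + 2⁻¹ := by
        simp only [RepTree.val]; linarith
      linarith
    have hblt : ∀ s : RepTree, s.Valid → (s.val < (node l r).val) → (q < s.val → ∃ j, FChain q j s.val) →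
        True := fun _ _ _ _ => trivial
    rcases le_or_gt l.val q with hl | hl
    · -- a = l.val
      rcases le_or_gt r.val q with hr | hr
      · exact ⟨1, l.val, r.val, Fus.fusible_val hvl, Fus.fusible_val hvr, hl, hlr, rfl, Or.inl hr⟩
      · have hrlt : r.val < (node l r).val := Fus.right_val_lt ⟨hvl, hvr, hlr⟩
        obtain ⟨j, hj⟩ := ihr hvr hr (by linarith)
        exact ⟨j+1, l.val, r.val, Fus.fusible_val hvl, Fus.fusible_val hvr, hl, hlr, rfl, Or.inr hj⟩
    · have hr : r.val ≤ q := by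
        by_contra hr
        exact hone ⟨hl, lt_of_not_ge hr⟩
      -- a = r.val , b = l.val
      have habs : |l.val - r.val| < 1 := by rwa [abs_sub_comm]
      have heq : (node l r).val = (r.val + l.val + 1)/2 := by
        simp only [RepTree.val]; ring
      have hllt : l.val < (node l r).val := Fus.left_val_lt ⟨hvl, hvr, hlr⟩
      obtain ⟨j, hj⟩ := ihl hvl hl (by linarith)
      exact ⟨j+1, r.val, l.val, Fus.fusible_val hvr, Fus.fusible_val hvl, hr, habs, heq, Or.inr hj⟩

open Classical in
noncomputable def frank (z : ℝ) : ℕ :=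
  if h : ∃ j, FChain q j z then Nat.find h else 0

open Classical in
theorem frank_spec {z : ℝ} (h : ∃ j, FChain q j z) : FChain q (frank q z) z := by
  rw [frank, dif_pos h]
  exact Nat.find_spec h

open Classical in
theorem frank_min {z : ℝ} {j : ℕ} (hj : FChain q j z) : frank q z ≤ j := by
  rw [frank, dif_pos ⟨j, hj⟩]
  exact Nat.find_min' _ hj

theorem frank_pos {z : ℝ} (h : ∃ j, FChain q j z) : 0 < frank q z := by
  rcases Nat.eq_zero_or_pos (frank q z) with h0 | h0
  · exfalso; have := frank_spec q h; rw [h0] at this; exact this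
  · exact h0

end WO
open Set RepTree

theorem fusible_strip_chain {q : ℝ} (hq : 0 ≤ q) {z : ℝ} (hz : Fusible z) (h1 : q < z)
    (h2 : z ≤ q + 4⁻¹) : ∃ j, FChain q j z := by
  obtain ⟨t, hv, hval⟩ := Fus.exists_tree hz
  subst hval
  exact fchain_exists q hq t hv h1 h2

theorem isWF_strip {q : ℝ} (hq : 0 ≤ q) (hA : ({x : ℝ | Fusible x ∧ x ≤ q}).IsWF) :
    ({x : ℝ | Fusible x ∧ x ≤ q + 4⁻¹}).IsWF := by
  classical
  set A := {x : ℝ | Fusible x ∧ x ≤ q} with hAdef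
  set B := {x : ℝ | Fusible x ∧ q < x ∧ x ≤ q + 4⁻¹} with hBdef
  have hsub : {x : ℝ | Fusible x ∧ x ≤ q + 4⁻¹} ⊆ A ∪ B := by
    rintro x ⟨hf, hle⟩
    rcases le_or_gt x q with h | h
    · exact Or.inl ⟨hf, h⟩
    · exact Or.inr ⟨hf, h, hle⟩
  have hB : B.IsWF := by
    rw [Set.isWF_iff_no_descending_seq]
    intro f hf hmem
    set Bad : (ℕ → ℝ) → Prop := fun g => StrictAnti g ∧ ∀ n, g n ∈ B with hBadDef
    have hne : Bad f := ⟨hf, hmem⟩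
    have hchain : ∀ z ∈ B, ∃ j, FChain q j z := fun z hz =>
      fusible_strip_chain hq hz.1 hz.2.1 hz.2.2
    have exmin : ∀ (C : (ℕ → ℝ) → Prop), (∃ g, C g) → ∀ n : ℕ,
        ∃ g, C g ∧ ∀ h, C h → frank q (g n) ≤ frank q (h n) := by
      intro C hC n
      have hE : ∃ j, ∃ g, C g ∧ frank q (g n) = j := by
        obtain ⟨g, hg⟩ := hC; exact ⟨_, g, hg, rfl⟩
      obtain ⟨g, hg, hgr⟩ := Nat.find_spec hE
      refine ⟨g, hg, fun h hh => ?_⟩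
      rw [hgr]
      exact Nat.find_min' hE ⟨h, hh, rfl⟩
    have hstep : ∀ (n : ℕ) (g : ℕ → ℝ), Bad g → ∃ g', (Bad g' ∧ ∀ i ≤ n, g' i = g i) ∧
        ∀ h, (Bad h ∧ ∀ i ≤ n, h i = g i) → frank q (g' (n+1)) ≤ frank q (h (n+1)) := by
      intro n g hg
      exact exmin (fun h => Bad h ∧ ∀ i ≤ n, h i = g i) ⟨g, hg, fun _ _ => rfl⟩ (n+1)
    choose step hstep1 hstep2 using hstep
    obtain ⟨g0, hg0, hmin0⟩ := exmin Bad ⟨f, hne⟩ 0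
    let T : ℕ → {g : ℕ → ℝ // Bad g} := fun n =>
      Nat.rec ⟨g0, hg0⟩ (fun n p => ⟨step n p.1 p.2, (hstep1 n p.1 p.2).1⟩) n
    have hTsucc : ∀ n, (T (n+1)).1 = step n (T n).1 (T n).2 := fun n => rfl
    have hagree : ∀ n, ∀ i ≤ n, (T (n+1)).1 i = (T n).1 i := by
      intro n i hi
      rw [hTsucc]; exact (hstep1 n (T n).1 (T n).2).2 i hi
    have hagree' : ∀ n m, n ≤ m → ∀ i, i ≤ n → (T m).1 i = (T n).1 i := by
      intro n m
      induction m with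
      | zero => intro hnm i hi; have : n = 0 := Nat.le_zero.1 hnm; subst this; rfl
      | succ m ih =>
        intro hnm i hi
        rcases Nat.eq_or_lt_of_le hnm with h | h
        · subst h; rfl
        · have hnm' : n ≤ m := Nat.lt_succ_iff.1 h
          rw [hagree m i (le_trans hi hnm'), ih hnm' i hi]
    set G : ℕ → ℝ := fun n => (T n).1 n with hG
    have hGmem : ∀ n, G n ∈ B := fun n => ((T n).2).2 n
    have hGanti : ∀ n, G (n+1) < G n := by
      intro n
      have h1 : (T (n+1)).1 (n+1) < (T (n+1)).1 n := ((T (n+1)).2).1 (Nat.lt_succ_self n)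
      rw [hagree n n le_rfl] at h1
      exact h1
    have hGsa : StrictAnti G := strictAnti_nat_of_succ_lt hGanti
    have hGBad : Bad G := ⟨hGsa, hGmem⟩
    have hGmin : ∀ (n : ℕ) (h : ℕ → ℝ), Bad h → (∀ i, i < n → h i = G i) →
        frank q (G n) ≤ frank q (h n) := by
      intro n h hh hagr
      cases n with
      | zero => exact hmin0 h hh
      | succ n =>
        have hagr' : ∀ i, i ≤ n → h i = (T n).1 i := by
          intro i hi
          rw [hagr i (Nat.lt_succ_of_le hi)]
          exact (hagree' i n hi i le_rfl).symm
        exact hstep2 n (T n).1 (T n).2 h ⟨hh, hagr'⟩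
    have hdec : ∀ n, ∃ a b : ℝ, Fusible a ∧ Fusible b ∧ a ≤ q ∧ |b - a| < 1 ∧
        G n = (a+b+1)/2 ∧ (b ≤ q ∨ (q < b ∧ frank q b < frank q (G n))) := by
      intro n
      have hch := frank_spec q (hchain _ (hGmem n))
      obtain ⟨j, hj⟩ : ∃ j, frank q (G n) = j + 1 := by
        have := frank_pos q (hchain _ (hGmem n))
        exact ⟨frank q (G n) - 1, by omega⟩
      rw [hj] at hch
      obtain ⟨a, b, h1, h2, h3, h4, h5, h6⟩ := hch
      refine ⟨a, b, h1, h2, h3, h4, h5, ?_⟩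
      rcases h6 with h6 | h6
      · exact Or.inl h6
      · rcases le_or_gt b q with hbq | hbq
        · exact Or.inl hbq
        · exact Or.inr ⟨hbq, by rw [hj]; exact Nat.lt_succ_of_le (frank_min q h6)⟩
    choose a b hfa hfb haq hba heq halt using hdec
    have hbval : ∀ n, b n = 2 * G n - 1 - a n := by
      intro n; have := heq n; linarith
    have hbltG : ∀ n, b n < G n := by
      intro n
      have h1 := heq n
      have h2 := (abs_lt.1 (hba n)).2
      linarith
    obtain ⟨φ, hφ⟩ := hA.isPWO.exists_monotone_subseq (f := a) (fun n => ⟨hfa n, haq n⟩)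
    have hbdec : ∀ {i j : ℕ}, i < j → b (φ j) < b (φ i) := by
      intro i j hij
      have h1 : a (φ i) ≤ a (φ j) := hφ hij.le
      have h2 : G (φ j) < G (φ i) := hGsa (φ.strictMono hij)
      rw [hbval (φ i), hbval (φ j)]
      linarith
    by_cases hcase : ∀ N, ∃ k, N ≤ k ∧ b (φ k) ≤ q
    · choose nxt hnxt1 hnxt2 using hcase
      let ψ : ℕ → ℕ := fun k => Nat.rec (nxt 0) (fun _ p => nxt (p+1)) k
      have hψsucc : ∀ k, ψ (k+1) = nxt (ψ k + 1) := fun k => rfl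
      have hψmono : ∀ k, ψ k < ψ (k+1) := by
        intro k
        rw [hψsucc]
        exact Nat.lt_of_succ_le (hnxt1 (ψ k + 1))
      have hψq : ∀ k, b (φ (ψ k)) ≤ q := by
        intro k
        cases k with
        | zero => exact hnxt2 0
        | succ k => rw [hψsucc]; exact hnxt2 _
      have hdesc : ∀ n : ℕ, b (φ (ψ (n+1))) < b (φ (ψ n)) := fun n => hbdec (hψmono n)
      rw [Set.isWF_iff_no_descending_seq] at hA
      exact hA (fun n => b (φ (ψ n))) (strictAnti_nat_of_succ_lt hdesc)
        (fun n => ⟨hfb _, hψq n⟩)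
    · push_neg at hcase
      obtain ⟨N, hN⟩ := hcase
      have hN' : ∀ k, N ≤ k → q < b (φ k) := fun k hk => hN k hk
      set M := φ N with hM
      set h : ℕ → ℝ := fun i => if i < M then G i else b (φ (N + (i - M))) with hdef
      have hMN : N ≤ M := φ.strictMono.le_apply
      have hhM : h M = b (φ N) := by
        simp only [hdef, lt_irrefl, if_false, Nat.sub_self, Nat.add_zero]
      have hmem' : ∀ i, h i ∈ B := by
        intro i
        by_cases hi : i < M
        · simp only [hdef, hi, if_true]; exact hGmem i
        · simp only [hdef, hi, if_false]
          have hk : N ≤ N + (i - M) := Nat.le_add_right _ _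
          refine ⟨hfb _, hN' _ hk, ?_⟩
          have := hbltG (φ (N + (i - M)))
          have h2 := (hGmem (φ (N + (i - M)))).2.2
          linarith
      have hanti : ∀ i, h (i+1) < h i := by
        intro i
        by_cases hi1 : i + 1 < M
        · have hi : i < M := by omega
          simp only [hdef, hi1, hi, if_true]
          exact hGanti i
        · by_cases hi : i < M
          · have hieq : i + 1 = M := by omega
            simp only [hdef, hi1, hi, if_true, if_false]
            have h1 : b (φ (N + (i + 1 - M))) < G (φ (N + (i + 1 - M))) := hbltG _
            have h2 : N + (i + 1 - M) = N := by omega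
            rw [h2] at h1 ⊢
            have h3 : G M < G i := by rw [← hieq]; exact hGanti i
            rw [hM] at h3
            linarith
          · simp only [hdef, hi1, hi, if_false]
            have e1 : N + (i + 1 - M) = (N + (i - M)) + 1 := by omega
            rw [e1]
            exact hbdec (Nat.lt_succ_self _)
      have hagr : ∀ i, i < M → h i = G i := by
        intro i hi; simp only [hdef, hi, if_true]
      have hkey := hGmin M h ⟨strictAnti_nat_of_succ_lt hanti, hmem'⟩ hagr
      rw [hhM] at hkey
      have hlt := (halt (φ N)).resolve_left (not_le.2 (hN' N le_rfl))
      have : frank q (G (φ N)) ≤ frank q (b (φ N)) := by rw [← hM] at *; exact hkey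
      omega
  exact Set.IsWF.mono (hA.union hB) hsub

theorem fusibleSet_isWF : ({x : ℝ | Fusible x}).IsWF := by
  have hS : ∀ m : ℕ, ({x : ℝ | Fusible x ∧ x ≤ (m : ℝ) * 4⁻¹}).IsWF := by
    intro m
    induction m with
    | zero =>
      refine Set.IsWF.mono (Set.isWF_singleton (a := (0:ℝ))) ?_
      rintro x ⟨hx1, hx2⟩
      have h0 := Fus.fusible_nonneg hx1
      have : x = 0 := le_antisymm (by simpa using hx2) h0
      simp [this]
    | succ m ih =>
      have := isWF_strip (q := (m : ℝ) * 4⁻¹) (by positivity) ih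
      have e : (m : ℝ) * 4⁻¹ + 4⁻¹ = ((m : ℕ) + 1 : ℝ) * 4⁻¹ := by push_cast; ring
      rw [e] at this
      convert this using 3
      push_cast
      ring
  rw [Set.isWF_iff_no_descending_seq]
  intro f hf hmem
  obtain ⟨m, hm⟩ := exists_nat_ge (4 * f 0)
  have hmem' : ∀ n, f n ∈ {x : ℝ | Fusible x ∧ x ≤ (m : ℝ) * 4⁻¹} := by
    intro n
    refine ⟨hmem n, ?_⟩
    have h1 : f n ≤ f 0 := hf.antitone (Nat.zero_le n)
    linarith
  exact Set.isWF_iff_no_descending_seq.1 (hS m) f hf hmem'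
/-! ### Closure of the fusible numbers under increasing limits -/

open Filter Topology

/-- decomposition of a positive fusible number into an ordered valid fuse. -/
theorem fusible_decomp {z : ℝ} (hz : Fusible z) (h0 : 0 < z) :
    ∃ x y : ℝ, Fusible x ∧ Fusible y ∧ x ≤ y ∧ y - x < 1 ∧ z = (x + y + 1)/2 := by
  obtain ⟨t, hv, hval⟩ := Fus.exists_tree hz
  cases t with
  | leaf =>
    exfalso
    simp only [RepTree.val] at hval
    exact absurd hval.symm (ne_of_gt h0)
  | node l r =>
    obtain ⟨hvl, hvr, hlr⟩ := hv
    rcases le_total l.val r.val with h | h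
    · refine ⟨l.val, r.val, Fus.fusible_val hvl, Fus.fusible_val hvr, h, ?_, ?_⟩
      · exact (abs_lt.1 hlr).2
      · rw [← hval]; simp [RepTree.val]
    · refine ⟨r.val, l.val, Fus.fusible_val hvr, Fus.fusible_val hvl, h, ?_, ?_⟩
      · rw [abs_sub_comm] at hlr; exact (abs_lt.1 hlr).2
      · rw [← hval]; simp only [RepTree.val]; ring
  
/-- limit points of the fusible numbers from below. -/
def FLim : Set ℝ := {σ | ∀ ε : ℝ, 0 < ε → ∃ g, Fusible g ∧ σ - ε < g ∧ g < σ}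

theorem flim_pos {σ : ℝ} (h : σ ∈ FLim) : 2⁻¹ < σ := by
  obtain ⟨g1, hg1, -, hg1'⟩ := h σ (by
    obtain ⟨g, hg, -, hg'⟩ := h 1 one_pos
    have := Fus.fusible_nonneg hg
    linarith)
  have h1 : 0 ≤ g1 := Fus.fusible_nonneg hg1
  obtain ⟨g2, hg2, hg2l, hg2u⟩ := h (σ - g1) (by linarith)
  have h2 : 0 < g2 := by linarith
  have := Fus.fusible_half_le' hg2 h2
  have : (1:ℝ)/2 ≤ g2 := this
  linarith

theorem fusible_sup_or_lim {u : ℕ → ℝ} (hu : ∀ n, Fusible (u n)) {ξ : ℝ}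
    (hten : Tendsto u atTop (𝓝 ξ)) (hle : ∀ n, u n ≤ ξ) : Fusible ξ ∨ ξ ∈ FLim := by
  by_cases hatt : ∃ n, u n = ξ
  · obtain ⟨n, hn⟩ := hatt
    exact Or.inl (hn ▸ hu n)
  · push_neg at hatt
    refine Or.inr (fun ε hε => ?_)
    have hev : ∀ᶠ n in atTop, ξ - ε < u n := hten.eventually (eventually_gt_nhds (by linarith))
    obtain ⟨n, hn⟩ := hev.exists
    exact ⟨u n, hu n, hn, lt_of_le_of_ne (hle n) (hatt n)⟩

theorem fusible_of_flim : ∀ σ ∈ FLim, Fusible σ := by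
  classical
  -- the union of fusibles and limit points is well-founded
  have hW : ({x : ℝ | Fusible x} ∪ FLim).IsWF := by
    rw [Set.isWF_iff_no_descending_seq]
    intro f hf hmem0
    have hmem : ∀ n : ℕ, f n ∈ ({x : ℝ | Fusible x} ∪ FLim) := fun n => hmem0 n
    have hpick : ∀ n : ℕ, ∃ g, Fusible g ∧ f (n+1) < g ∧ g ≤ f n := by
      intro n
      rcases hmem n with hfus | hlim
      · exact ⟨f n, hfus, hf (Nat.lt_succ_self n), le_rfl⟩
      · obtain ⟨g, h1, h2, h3⟩ := hlim (f n - f (n+1)) (by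
          have := hf (Nat.lt_succ_self n); linarith)
        exact ⟨g, h1, by linarith, le_of_lt h3⟩
    choose g hg1 hg2 hg3 using hpick
    have hdesc : ∀ n, g (n+1) < g n := by
      intro n
      calc g (n+1) ≤ f (n+1) := hg3 (n+1)
      _ < g n := hg2 n
    exact Set.isWF_iff_no_descending_seq.1 fusibleSet_isWF g
      (strictAnti_nat_of_succ_lt hdesc) (fun n => hg1 n)
  intro σ hσ
  refine Set.WellFoundedOn.induction hW (Set.mem_union_right _ hσ) ?_
  intro y hy IH
  rcases hy with hyF | hyL
  · exact hyF
  have hhalf : (2:ℝ)⁻¹ < y := flim_pos hyL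
  have hc : ∀ n : ℕ, ∃ g, Fusible g ∧ y - min ((n:ℝ)+1)⁻¹ (y - 2⁻¹) < g ∧ g < y := fun n =>
    hyL _ (lt_min (by positivity) (by linarith))
  choose c hc1 hc2 hc3 using hc
  have hcpos : ∀ n : ℕ, 0 < c n := by
    intro n
    have h1 := min_le_right ((n:ℝ)+1)⁻¹ (y - 2⁻¹)
    have h2 := hc2 n
    linarith
  have hcl : ∀ n : ℕ, y - ((n:ℝ)+1)⁻¹ ≤ c n := by
    intro n
    have h1 := min_le_left ((n:ℝ)+1)⁻¹ (y - 2⁻¹)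
    have h2 := hc2 n
    linarith
  have hcten : Tendsto c atTop (𝓝 y) := by
    have h0 : Tendsto (fun n : ℕ => ((n:ℝ)+1)⁻¹) atTop (𝓝 0) := by
      have := tendsto_one_div_add_atTop_nhds_zero_nat (𝕜 := ℝ)
      simpa [one_div] using this
    have hlow : Tendsto (fun n : ℕ => y - ((n:ℝ)+1)⁻¹) atTop (𝓝 y) := by
      simpa using tendsto_const_nhds.sub h0
    exact tendsto_of_tendsto_of_tendsto_of_le_of_le hlow tendsto_const_nhds hcl
      (fun n => le_of_lt (hc3 n))
  have hdec : ∀ n, ∃ xy : ℝ × ℝ, Fusible xy.1 ∧ Fusible xy.2 ∧ xy.1 ≤ xy.2 ∧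
      xy.2 - xy.1 < 1 ∧ c n = (xy.1 + xy.2 + 1)/2 := by
    intro n
    obtain ⟨x, yy, h1, h2, h3, h4, h5⟩ := fusible_decomp (hc1 n) (hcpos n)
    exact ⟨(x, yy), h1, h2, h3, h4, h5⟩
  choose p hp1 hp2 hp3 hp4 hp5 using hdec
  obtain ⟨φ1, hφ1⟩ := fusibleSet_isWF.isPWO.exists_monotone_subseq (f := fun n => (p n).2)
    (fun n => hp2 n)
  obtain ⟨φ2, hφ2⟩ := fusibleSet_isWF.isPWO.exists_monotone_subseq (f := fun n => (p (φ1 n)).1)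
    (fun n => hp1 _)
  set idx : ℕ → ℕ := fun n => φ1 (φ2 n) with hidx
  set u : ℕ → ℝ := fun n => (p (idx n)).1 with hu
  set v : ℕ → ℝ := fun n => (p (idx n)).2 with hv
  have humono : Monotone u := fun m n hmn => hφ2 hmn
  have hvmono : Monotone v := fun m n hmn => hφ1 (φ2.monotone hmn)
  have hvltc : ∀ n : ℕ, v n < c (idx n) := by
    intro n
    have h1 := hp5 (idx n)
    have h2 := hp4 (idx n)
    simp only [hu, hv] at *
    linarith
  have hvlty : ∀ n : ℕ, v n < y := fun n => lt_trans (hvltc n) (hc3 _)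
  have hulty : ∀ n : ℕ, u n < y := fun n => lt_of_le_of_lt (hp3 _) (hvlty n)
  have hubdd : BddAbove (Set.range u) := ⟨y, by rintro _ ⟨n, rfl⟩; exact le_of_lt (hulty n)⟩
  have hvbdd : BddAbove (Set.range v) := ⟨y, by rintro _ ⟨n, rfl⟩; exact le_of_lt (hvlty n)⟩
  set ξ := ⨆ n, u n with hξdef
  set τ := ⨆ n, v n with hτdef
  have huten : Tendsto u atTop (𝓝 ξ) := tendsto_atTop_ciSup humono hubdd
  have hvten : Tendsto v atTop (𝓝 τ) := tendsto_atTop_ciSup hvmono hvbdd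
  have hule : ∀ n : ℕ, u n ≤ ξ := fun n => le_ciSup hubdd n
  have hvle : ∀ n : ℕ, v n ≤ τ := fun n => le_ciSup hvbdd n
  have hidxten : Tendsto (fun n => c (idx n)) atTop (𝓝 y) :=
    hcten.comp ((φ1.strictMono.comp φ2.strictMono).tendsto_atTop)
  have hteq : y = (ξ + τ + 1)/2 := by
    have h1 : Tendsto (fun n => (u n + v n + 1)/2) atTop (𝓝 ((ξ + τ + 1)/2)) :=
      (((huten.add hvten).add_const 1).div_const 2)
    have h2 : (fun n => c (idx n)) = fun n => (u n + v n + 1)/2 := funext (fun n => hp5 (idx n))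
    rw [h2] at hidxten
    exact tendsto_nhds_unique hidxten h1
  have hτley : τ ≤ y := ciSup_le (fun n => le_of_lt (hvlty n))
  have hξleτ : ξ ≤ τ := ciSup_le (fun n => le_trans (hp3 _) (hvle n))
  rcases eq_or_lt_of_le hτley with hτy | hτy
  · have hξ : ξ = y - 1 := by rw [hτy] at hteq; linarith
    have hFξ : Fusible ξ := by
      rcases fusible_sup_or_lim (fun n => hp1 _) huten hule with h | h
      · exact h
      · exact IH ξ (Set.mem_union_right _ h) (by rw [hξ]; linarith)
    have h2 := Fus.Fusible.add_one hFξ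
    have e : ξ + 1 = y := by rw [hξ]; ring
    rwa [e] at h2
  · have hFτ : Fusible τ := by
      rcases fusible_sup_or_lim (fun n => hp2 _) hvten hvle with h | h
      · exact h
      · exact IH τ (Set.mem_union_right _ h) hτy
    have hFξ : Fusible ξ := by
      rcases fusible_sup_or_lim (fun n => hp1 _) huten hule with h | h
      · exact h
      · exact IH ξ (Set.mem_union_right _ h) (lt_of_le_of_lt hξleτ hτy)
    have hsub1 : τ ≤ ξ + 1 := by
      rw [hτdef]
      refine ciSup_le (fun n => ?_)
      have h1 := hp4 (idx n)
      have h2 := hule n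
      simp only [hu, hv] at *
      linarith
    have hne : τ - ξ ≠ 1 := by
      intro h1
      rw [hteq] at hτy
      linarith
    have habs : |τ - ξ| < 1 := abs_lt.2 ⟨by linarith, lt_of_le_of_ne (by linarith) hne⟩
    have h2 := Fusible.fuse ξ τ hFξ hFτ habs
    rw [hteq]
    exact h2

/-! ### Existence and uniqueness of the maximal representation height -/

theorem hmax_unique {z : ℝ} {m n : ℕ} (hm : HMaxIs z m) (hn : HMaxIs z n) : m = n := by
  obtain ⟨⟨t, hv, hval, hht⟩, hub⟩ := hm
  obtain ⟨⟨s, sv, sval, hhs⟩, sub⟩ := hn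
  have h1 := sub t hv hval
  have h2 := hub s sv sval
  omega

theorem hmax_zero : HMaxIs 0 0 := by
  constructor
  · exact ⟨RepTree.leaf, trivial, rfl, rfl⟩
  · intro t hv hval
    have h := Fus.eq_leaf_of_val_eq_zero hval
    subst h
    exact le_refl _

theorem hmax_exists : ∀ z : ℝ, Fusible z → ∃ n, HMaxIs z n := by
  classical
  intro z hz
  refine Set.WellFoundedOn.induction (P := fun w => ∃ n, HMaxIs w n) fusibleSet_isWF (x := z) hz ?_
  intro y hy IH
  rcases eq_or_lt_of_le (Fus.fusible_nonneg hy) with h0 | h0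
  · exact ⟨0, h0 ▸ hmax_zero⟩
  set YS := {b : ℝ | Fusible b ∧ Fusible (2*y - 1 - b) ∧ 2*y - 1 - b ≤ b ∧
      b - (2*y - 1 - b) < 1} with hYS
  have hblty : ∀ b ∈ YS, b < y := by
    rintro b ⟨h1, h2, h3, h4⟩
    linarith
  have halty : ∀ b ∈ YS, 2*y - 1 - b < y := by
    intro b hb
    have h3 := hb.2.2.1
    have := hblty b hb
    linarith
  have hane : YS.Nonempty := by
    obtain ⟨x, yv, h1, h2, h3, h4, h5⟩ := fusible_decomp hy h0
    have hx : 2*y - 1 - yv = x := by rw [h5]; ring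
    refine ⟨yv, h2, ?_, ?_, ?_⟩ <;> rw [hx]
    · exact h1
    · exact h3
    · linarith
  have hfin : YS.Finite := by
    by_contra hinf
    have f := (Set.Infinite.natEmbedding YS hinf)
    obtain ⟨φ, hφ⟩ := fusibleSet_isWF.isPWO.exists_monotone_subseq (f := fun n => (f n : ℝ))
      (fun n => (f n).2.1)
    have hmono : Monotone (fun n => (f (φ n) : ℝ)) := fun m n hmn => hφ hmn
    have hinj : Function.Injective (fun n => (f (φ n) : ℝ)) := by
      intro m n hmn
      have := Subtype.coe_injective hmn
      exact φ.injective (f.injective this)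
    have hsm : StrictMono (fun n => (f (φ n) : ℝ)) := hmono.strictMono_of_injective hinj
    have hdesc : ∀ n : ℕ, 2*y - 1 - (f (φ (n+1)) : ℝ) < 2*y - 1 - (f (φ n) : ℝ) := by
      intro n
      have := hsm (Nat.lt_succ_self n)
      linarith
    refine Set.isWF_iff_no_descending_seq.1 fusibleSet_isWF
      (fun n => 2*y - 1 - (f (φ n) : ℝ)) (strictAnti_nat_of_succ_lt hdesc) (fun n => ?_)
    exact (f (φ n)).2.2.1
  have hpair : ∀ b ∈ YS, ∃ nm : ℕ × ℕ, HMaxIs b nm.1 ∧ HMaxIs (2*y - 1 - b) nm.2 := by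
    intro b hb
    obtain ⟨n1, hn1⟩ := IH b hb.1 (hblty b hb)
    obtain ⟨n2, hn2⟩ := IH (2*y - 1 - b) hb.2.1 (halty b hb)
    exact ⟨(n1, n2), hn1, hn2⟩
  choose nm hnm1 hnm2 using hpair
  let k : ℝ → ℕ := fun b => if hb : b ∈ YS then max (nm b hb).1 (nm b hb).2 else 0
  have hk1 : ∀ b (hb : b ∈ YS), (nm b hb).1 ≤ k b := by
    intro b hb; simp only [k, dif_pos hb]; exact le_max_left _ _
  have hk2 : ∀ b (hb : b ∈ YS), (nm b hb).2 ≤ k b := by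
    intro b hb; simp only [k, dif_pos hb]; exact le_max_right _ _
  have hne' : (hfin.toFinset.image k).Nonempty := by
    obtain ⟨b, hb⟩ := hane
    exact ⟨k b, Finset.mem_image_of_mem k (hfin.mem_toFinset.2 hb)⟩
  set N := (hfin.toFinset.image k).max' hne' with hN
  have hkN : ∀ b ∈ YS, k b ≤ N :=
    fun b hb => Finset.le_max' _ _ (Finset.mem_image_of_mem k (hfin.mem_toFinset.2 hb))
  obtain ⟨bmax, hbmaxmem, hbmaxk⟩ : ∃ b ∈ YS, k b = N := by
    have := (hfin.toFinset.image k).max'_mem hne'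
    rw [← hN] at this
    obtain ⟨b, hb, hbk⟩ := Finset.mem_image.1 this
    exact ⟨b, hfin.mem_toFinset.1 hb, hbk⟩
  refine ⟨N + 1, ?_, ?_⟩
  · -- witness tree of height N+1
    obtain ⟨⟨t1, ht1v, ht1val, ht1h⟩, hub1⟩ := hnm1 bmax hbmaxmem
    obtain ⟨⟨t2, ht2v, ht2val, ht2h⟩, hub2⟩ := hnm2 bmax hbmaxmem
    refine ⟨RepTree.node t2 t1, ⟨ht2v, ht1v, ?_⟩, ?_, ?_⟩
    · rw [ht1val, ht2val]
      have h3 := hbmaxmem.2.2.1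
      have h4 := hbmaxmem.2.2.2
      rw [abs_lt]
      constructor <;> linarith
    · simp only [RepTree.val, ht1val, ht2val]
      ring
    · simp only [RepTree.height, ht1h, ht2h]
      rw [max_comm]
      have : max (nm bmax hbmaxmem).1 (nm bmax hbmaxmem).2 = k bmax := by
        simp only [k, dif_pos hbmaxmem]
      rw [this, hbmaxk]
  · -- upper bound
    intro t hv hval
    cases t with
    | leaf =>
      exfalso
      simp only [RepTree.val] at hval
      exact absurd hval.symm (ne_of_gt h0)
    | node l r =>
      obtain ⟨hvl, hvr, hlr⟩ := hv
      have hsum : l.val + r.val = 2*y - 1 := by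
        simp only [RepTree.val] at hval
        linarith
      rcases le_total l.val r.val with hor | hor
      · have hbmem : r.val ∈ YS := by
          refine ⟨Fus.fusible_val hvr, ?_, ?_, ?_⟩
          · have : 2*y - 1 - r.val = l.val := by linarith
            rw [this]; exact Fus.fusible_val hvl
          · linarith
          · have := (abs_lt.1 hlr).2; linarith
        have hlh : l.height ≤ (nm r.val hbmem).2 := by
          refine (hnm2 r.val hbmem).2 l hvl ?_
          linarith
        have hrh : r.height ≤ (nm r.val hbmem).1 := (hnm1 r.val hbmem).2 r hvr rfl
        have hkb := hkN r.val hbmem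
        have h1 := hk1 r.val hbmem
        have h2 := hk2 r.val hbmem
        simp only [RepTree.height]
        omega
      · have hbmem : l.val ∈ YS := by
          refine ⟨Fus.fusible_val hvl, ?_, ?_, ?_⟩
          · have : 2*y - 1 - l.val = r.val := by linarith
            rw [this]; exact Fus.fusible_val hvr
          · linarith
          · have := (abs_lt.1 hlr).1; linarith
        have hrh : r.height ≤ (nm l.val hbmem).2 := by
          refine (hnm2 l.val hbmem).2 r hvr ?_
          linarith
        have hlh : l.height ≤ (nm l.val hbmem).1 := (hnm1 l.val hbmem).2 l hvl rfl
        have hkb := hkN l.val hbmem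
        have h1 := hk1 l.val hbmem
        have h2 := hk2 l.val hbmem
        simp only [RepTree.height]
        omega
open Fus
/-! ### Small supporting lemmas for the main induction -/

theorem inv_pow_le {a b : ℕ} (h : a ≤ b) : ((2:ℝ)^b)⁻¹ ≤ ((2:ℝ)^a)⁻¹ := by
  apply inv_anti₀ (by positivity)
  exact pow_le_pow_right₀ (by norm_num) h

theorem inv_pow_lt {a b : ℕ} (h : a < b) : ((2:ℝ)^b)⁻¹ < ((2:ℝ)^a)⁻¹ := by
  apply inv_strictAnti₀ (by positivity)
  exact pow_lt_pow_right₀ (by norm_num) h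

theorem inv_pow_pos (a : ℕ) : (0:ℝ) < ((2:ℝ)^a)⁻¹ := by positivity

theorem inv_pow_le_one (a : ℕ) : ((2:ℝ)^a)⁻¹ ≤ 1 := by
  rw [inv_le_one_iff₀]
  right
  exact one_le_pow₀ (by norm_num)

theorem inv_pow_succ (a : ℕ) : ((2:ℝ)^(a+1))⁻¹ = ((2:ℝ)^a)⁻¹/2 := by
  rw [pow_succ]
  rw [mul_inv]
  ring

theorem dy_inv_pow {m k : ℕ} (h : m ≤ k) : Dy k (((2:ℝ)^m)⁻¹) := by
  refine ⟨2^(k-m), ?_⟩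
  have : (2:ℝ)^k = 2^m * 2^(k-m) := by rw [← pow_add]; congr 1; omega
  rw [this]
  push_cast
  rw [← mul_assoc, inv_mul_cancel₀ (by positivity), one_mul]

theorem hmax_fusible {z : ℝ} {k : ℕ} (h : HMaxIs z k) : Fusible z := by
  obtain ⟨⟨t, hv, hval, -⟩, -⟩ := h
  exact hval ▸ Fus.fusible_val hv

theorem hmax_dy {z : ℝ} {k : ℕ} (h : HMaxIs z k) : Dy k z := by
  obtain ⟨⟨t, hv, hval, hh⟩, -⟩ := h
  have := Fus.val_dy t
  rw [hval, hh] at this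
  exact this

theorem hmax_pos {z : ℝ} {k : ℕ} (h : HMaxIs z k) (h0 : 0 < z) : 1 ≤ k := by
  obtain ⟨⟨t, hv, hval, hh⟩, -⟩ := h
  cases t with
  | leaf => exfalso; simp only [RepTree.val] at hval; exact absurd hval.symm (ne_of_gt h0)
  | node l r => rw [← hh]; simp only [RepTree.height]; omega

theorem hmax_add_two {w : ℝ} {m k : ℕ} (hm : HMaxIs w m) (hk : HMaxIs (w+1) k) :
    m + 2 ≤ k := by
  obtain ⟨⟨t, hv, hval, hh⟩, -⟩ := hm
  have h1 : (RepTree.node t t).Valid := ⟨hv, hv, by simp⟩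
  have h1v : (RepTree.node t t).val = w + 2⁻¹ := by
    simp only [RepTree.val, hval]; ring
  have h2 : (RepTree.node (RepTree.node t t) (RepTree.node t t)).Valid := ⟨h1, h1, by simp⟩
  have h2v : (RepTree.node (RepTree.node t t) (RepTree.node t t)).val = w + 1 := by
    simp only [RepTree.val, hval]; ring
  have := hk.2 _ h2 h2v
  simp only [RepTree.height, hh] at this
  omega

/-- structure of fusible numbers in `(0,1)` : the unique decomposition is `0 ~ (2z-1)`. -/
theorem hmax_lt_one {z : ℝ} {k : ℕ} (h0 : 0 < z) (h1 : z < 1) (hk : HMaxIs z k) :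
    ∃ k', k = k' + 1 ∧ HMaxIs (2*z - 1) k' ∧ Fusible (2*z - 1) := by
  have hmin0 : ∀ l r : RepTree, (RepTree.node l r).Valid → (RepTree.node l r).val = z →
      (l.val = 0 ∧ r.val = 2*z-1) ∨ (r.val = 0 ∧ l.val = 2*z-1) := by
    intro l r hv hval
    obtain ⟨hvl, hvr, -⟩ := hv
    have hsum : l.val + r.val = 2*z - 1 := by
      simp only [RepTree.val] at hval; linarith
    have hl0 := Fus.fusible_zero_or_half_le (Fus.fusible_val hvl)
    have hr0 := Fus.fusible_zero_or_half_le (Fus.fusible_val hvr)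
    have hlpos := Fus.val_nonneg l
    have hrpos := Fus.val_nonneg r
    rcases hl0 with hl | hl
    · exact Or.inl ⟨hl, by linarith⟩
    · rcases hr0 with hr | hr
      · exact Or.inr ⟨hr, by linarith⟩
      · exfalso; linarith
  obtain ⟨⟨t, hv, hval, hh⟩, hub⟩ := hk
  cases t with
  | leaf => exact absurd (by simpa [RepTree.val] using hval.symm) (ne_of_gt h0)
  | node l r =>
    have hk1 : 1 ≤ k := by rw [← hh]; simp only [RepTree.height]; omega
    refine ⟨k - 1, by omega, ⟨?_, ?_⟩, ?_⟩
    · -- witness tree of height k-1 for 2z-1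
      rcases hmin0 l r hv hval with ⟨he0, hrv⟩ | ⟨he0, hrv⟩
      · have hleaf := Fus.eq_leaf_of_val_eq_zero he0
        refine ⟨r, hv.2.1, hrv, ?_⟩
        rw [← hh]; simp only [RepTree.height]
        rw [hleaf]; simp [RepTree.height]
      · have hleaf := Fus.eq_leaf_of_val_eq_zero he0
        refine ⟨l, hv.1, hrv, ?_⟩
        rw [← hh]; simp only [RepTree.height]
        rw [hleaf]; simp [RepTree.height]
    · -- upper bound for trees of 2z-1
      intro s hsv hsval
      have habs : |s.val - RepTree.leaf.val| < 1 := by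
        simp only [RepTree.val, hsval]
        rw [abs_lt]; constructor <;> linarith
      have hnv : (RepTree.node RepTree.leaf s).Valid := ⟨trivial, hsv, habs⟩
      have hnval : (RepTree.node RepTree.leaf s).val = z := by
        simp only [RepTree.val, hsval]; ring
      have := hub _ hnv hnval
      simp only [RepTree.height] at this
      omega
    · -- fusibility
      rcases hmin0 l r hv hval with ⟨-, hrv⟩ | ⟨-, hrv⟩
      · exact hrv ▸ Fus.fusible_val hv.2.1
      · exact hrv ▸ Fus.fusible_val hv.1

theorem fusible_lt_one_le : ∀ z : ℝ, Fusible z → ∀ k : ℕ, HMaxIs z k → z < 1 →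
    z + ((2:ℝ)^k)⁻¹ ≤ 1 := by
  intro z hz
  refine Set.WellFoundedOn.induction
    (P := fun w => ∀ k : ℕ, HMaxIs w k → w < 1 → w + ((2:ℝ)^k)⁻¹ ≤ 1)
    fusibleSet_isWF (x := z) hz ?_
  intro y hy IH k hk h1
  rcases eq_or_lt_of_le (Fus.fusible_nonneg hy) with h0 | h0
  · have : k = 0 := hmax_unique hk (h0 ▸ hmax_zero)
    subst this
    simp only [pow_zero, inv_one]
    linarith
  · obtain ⟨k', hk', hmax', hfus'⟩ := hmax_lt_one h0 h1 hk
    have hlt : 2*y - 1 < y := by linarith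
    have h1' : 2*y - 1 < 1 := by linarith
    have := IH (2*y-1) hfus' hlt k' hmax' h1'
    subst hk'
    rw [pow_succ]
    have h2 : ((2:ℝ)^k' * 2)⁻¹ = ((2:ℝ)^k')⁻¹ / 2 := by rw [mul_inv]; ring
    rw [h2]
    linarith

/-- every positive fusible number with maximal height `k` has a representation whose
children values `e,f` satisfy `hmax e = k-1`, `hmax f ≤ k-1`. -/
theorem exists_child_pair {z : ℝ} {k : ℕ} (h0 : 0 < z) (hk : HMaxIs z k) :
    ∃ (e f : ℝ) (k' kf : ℕ), k = k' + 1 ∧ Fusible e ∧ Fusible f ∧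
      e + f = 2*z - 1 ∧ |f - e| < 1 ∧ e < z ∧ f < z ∧
      HMaxIs e k' ∧ HMaxIs f kf ∧ kf ≤ k' := by
  obtain ⟨⟨t, hv, hval, hh⟩, hub⟩ := hk
  cases t with
  | leaf => exact absurd (by simpa [RepTree.val] using hval.symm) (ne_of_gt h0)
  | node l r =>
    obtain ⟨hvl, hvr, hlr⟩ := hv
    have hk1 : 1 ≤ k := by rw [← hh]; simp only [RepTree.height]; omega
    have hsum : l.val + r.val = 2*z - 1 := by
      simp only [RepTree.val] at hval; linarith
    obtain ⟨kl, hkl⟩ := hmax_exists l.val (Fus.fusible_val hvl)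
    obtain ⟨kr, hkr⟩ := hmax_exists r.val (Fus.fusible_val hvr)
    -- children bounds : any tree of a child value has height ≤ k - 1
    have hbl : kl ≤ k - 1 := by
      obtain ⟨⟨s, hsv, hsval, hsh⟩, -⟩ := hkl
      have hnv : (RepTree.node s r).Valid := ⟨hsv, hvr, by rwa [hsval]⟩
      have hnval : (RepTree.node s r).val = z := by
        simp only [RepTree.val, hsval]
        simp only [RepTree.val] at hval
        linarith
      have := hub _ hnv hnval
      simp only [RepTree.height] at this
      omega
    have hbr : kr ≤ k - 1 := by
      obtain ⟨⟨s, hsv, hsval, hsh⟩, -⟩ := hkr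
      have hnv : (RepTree.node l s).Valid := ⟨hvl, hsv, by rwa [hsval]⟩
      have hnval : (RepTree.node l s).val = z := by
        simp only [RepTree.val, hsval]
        simp only [RepTree.val] at hval
        linarith
      have := hub _ hnv hnval
      simp only [RepTree.height] at this
      omega
    have hhl : l.height ≤ kl := hkl.2 l hvl rfl
    have hhr : r.height ≤ kr := hkr.2 r hvr rfl
    have hmx : max l.height r.height = k - 1 := by
      rw [← hh]; simp only [RepTree.height]; omega
    have habs' : |l.val - r.val| < 1 := by rwa [abs_sub_comm]
    have hlz : l.val < z := hval ▸ Fus.left_val_lt ⟨hvl, hvr, hlr⟩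
    have hrz : r.val < z := hval ▸ Fus.right_val_lt ⟨hvl, hvr, hlr⟩
    rcases Nat.eq_or_lt_of_le hbl with hkl' | hkl'
    · exact ⟨l.val, r.val, k - 1, kr, by omega, Fus.fusible_val hvl, Fus.fusible_val hvr,
        hsum, hlr, hlz, hrz, hkl' ▸ hkl, hkr, hbr⟩
    · have : kr = k - 1 := by omega
      exact ⟨r.val, l.val, k - 1, kl, by omega, Fus.fusible_val hvr, Fus.fusible_val hvl,
        by linarith, habs', hrz, hlz, this ▸ hkr, hkl, by omega⟩

/-- the supremum of a nonempty bounded set of fusible numbers is fusible. -/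
theorem fusible_sSup {A : Set ℝ} (hA : ∀ g ∈ A, Fusible g) (hne : A.Nonempty)
    (hbdd : BddAbove A) : Fusible (sSup A) := by
  by_cases hatt : sSup A ∈ A
  · exact hA _ hatt
  · refine fusible_of_flim _ (fun ε hε => ?_)
    obtain ⟨g, hgA, hgt⟩ := exists_lt_of_lt_csSup hne (by linarith : sSup A - ε < sSup A)
    refine ⟨g, hA g hgA, hgt, ?_⟩
    exact lt_of_le_of_ne (le_csSup hbdd hgA) (fun h => hatt (h ▸ hgA))
/-! ### The main induction package -/

def Pack (z : ℝ) : Prop :=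
  ∀ k : ℕ, HMaxIs z k →
    Fusible (z + ((2:ℝ)^(k+1))⁻¹) ∧
    (∀ w : ℝ, Fusible w → z < w → z + ((2:ℝ)^(k+1))⁻¹ ≤ w) ∧
    HMaxIs (z + ((2:ℝ)^(k+1))⁻¹) (k+1)

/-- predecessor lemma : assuming the package below `z`, every positive fusible `x < z`
with `hmax x = K` has `x - 2⁻ᴷ` fusible, with `hmax ≥ K - 1`. -/
theorem pred_of_IH {z : ℝ} (IH : ∀ s : ℝ, Fusible s → s < z → Pack s)
    {x : ℝ} (hx : Fusible x) (h0 : 0 < x) (hxz : x < z) {K : ℕ} (hK : HMaxIs x K) :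
    Fusible (x - ((2:ℝ)^K)⁻¹) ∧ ∃ K', HMaxIs (x - ((2:ℝ)^K)⁻¹) K' ∧ K - 1 ≤ K' := by
  classical
  set A := {g : ℝ | Fusible g ∧ g < x} with hA
  have hAne : A.Nonempty := ⟨0, Fusible.zero, h0⟩
  have hAb : BddAbove A := ⟨x, fun g hg => le_of_lt hg.2⟩
  have hAF : ∀ g ∈ A, Fusible g := fun g hg => hg.1
  set σ := sSup A with hσdef
  have hσF : Fusible σ := fusible_sSup hAF hAne hAb
  have hσle : σ ≤ x := csSup_le hAne (fun g hg => le_of_lt hg.2)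
  rcases eq_or_lt_of_le hσle with hcase | hcase
  · -- limit case : σ = x
    have hlim : ∀ ε : ℝ, 0 < ε → ∃ g, Fusible g ∧ x - ε < g ∧ g < x := by
      intro ε hε
      have hlt : x - ε < σ := by rw [hcase]; linarith
      obtain ⟨g, hgA, hgt⟩ := exists_lt_of_lt_csSup hAne hlt
      exact ⟨g, hgA.1, hgt, hgA.2⟩
    set S0 := {g : ℝ | Fusible g ∧ x - ((2:ℝ)^K)⁻¹ < g ∧ g < x} with hS0
    have hS0wf : S0.IsWF := fusibleSet_isWF.mono (fun g hg => hg.1)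
    have hS0ne : S0.Nonempty := by
      obtain ⟨g, h1, h2, h3⟩ := hlim _ (inv_pow_pos K)
      exact ⟨g, h1, h2, h3⟩
    set m0 := hS0wf.min hS0ne with hm0def
    obtain ⟨hm0F, hm0l, hm0u⟩ := hS0wf.min_mem hS0ne
    obtain ⟨h0', hh0⟩ := hmax_exists m0 hm0F
    have hDx : Dy K x := hmax_dy hK
    have hKh0 : K + 1 ≤ h0' := by
      by_contra hcon
      have hDm : Dy K m0 := (hmax_dy hh0).mono (by omega)
      have := hDm.gap hDx hm0u
      linarith
    have hxinv : ((2:ℝ)^K)⁻¹ ≤ x := hDx.nonneg_of_pos h0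
    have hm0pos : 0 < m0 := by linarith
    set A0 := {g : ℝ | Fusible g ∧ g < m0} with hA0
    have hA0ne : A0.Nonempty := ⟨0, Fusible.zero, hm0pos⟩
    have hA0b : BddAbove A0 := ⟨m0, fun g hg => le_of_lt hg.2⟩
    set p := sSup A0 with hpdef
    have hpF : Fusible p := fusible_sSup (fun g hg => hg.1) hA0ne hA0b
    have hgle : ∀ g, Fusible g → g < m0 → g ≤ x - ((2:ℝ)^K)⁻¹ := by
      intro g hg hgm
      by_contra hcon
      push_neg at hcon
      have hmem : g ∈ S0 := ⟨hg, hcon, lt_trans hgm hm0u⟩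
      exact absurd hgm (hS0wf.not_lt_min hS0ne hmem)
    have hple : p ≤ x - ((2:ℝ)^K)⁻¹ := csSup_le hA0ne (fun g hg => hgle g hg.1 hg.2)
    have hpm0 : p < m0 := lt_of_le_of_lt hple hm0l
    obtain ⟨kp, hkp⟩ := hmax_exists p hpF
    have hpz : p < z := by linarith
    obtain ⟨hq1, hq2, hq3⟩ := IH p hpF hpz kp hkp
    have hle1 : p + ((2:ℝ)^(kp+1))⁻¹ ≤ m0 := hq2 m0 hm0F hpm0
    have heqm : m0 = p + ((2:ℝ)^(kp+1))⁻¹ := by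
      rcases eq_or_lt_of_le hle1 with h | h
      · exact h.symm
      · exfalso
        have hmem : p + ((2:ℝ)^(kp+1))⁻¹ ∈ A0 := ⟨hq1, h⟩
        have := le_csSup hA0b hmem
        have := inv_pow_pos (kp+1)
        linarith
    have hh0eq : h0' = kp + 1 := hmax_unique hh0 (heqm ▸ hq3)
    have hKkp : K ≤ kp := by omega
    have hd1 : Dy kp (x - ((2:ℝ)^K)⁻¹ - p) :=
      ((hDx.mono hKkp).sub (dy_inv_pow hKkp)).sub (hmax_dy hkp)
    have hdlt : x - ((2:ℝ)^K)⁻¹ - p < ((2:ℝ)^kp)⁻¹ := by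
      have h1 : x - m0 < ((2:ℝ)^K)⁻¹ := by linarith
      have h2 : ((2:ℝ)^(kp+1))⁻¹ < ((2:ℝ)^kp)⁻¹ := inv_pow_lt (Nat.lt_succ_self kp)
      have h3 : x - ((2:ℝ)^K)⁻¹ - p = (x - m0) - ((2:ℝ)^K)⁻¹ + ((2:ℝ)^(kp+1))⁻¹ := by
        rw [heqm]; ring
      linarith
    have hd0 : x - ((2:ℝ)^K)⁻¹ - p = 0 := by
      by_contra hne
      have hpos : 0 < x - ((2:ℝ)^K)⁻¹ - p := lt_of_le_of_ne (by linarith) (Ne.symm hne)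
      have := hd1.nonneg_of_pos hpos
      linarith
    have hpeq : x - ((2:ℝ)^K)⁻¹ = p := by linarith
    rw [hpeq]
    exact ⟨hpF, kp, hkp, by omega⟩
  · -- successor case
    have hσA : σ ∈ A := ⟨hσF, hcase⟩
    obtain ⟨kσ, hkσ⟩ := hmax_exists σ hσF
    obtain ⟨hp1, hp2, hp3⟩ := IH σ hσF (lt_trans hcase hxz) kσ hkσ
    have hle1 : σ + ((2:ℝ)^(kσ+1))⁻¹ ≤ x := hp2 x hx hcase
    have heq : x = σ + ((2:ℝ)^(kσ+1))⁻¹ := by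
      rcases eq_or_lt_of_le hle1 with h | h
      · exact h.symm
      · exfalso
        have hmem : σ + ((2:ℝ)^(kσ+1))⁻¹ ∈ A := ⟨hp1, h⟩
        have := le_csSup hAb hmem
        have := inv_pow_pos (kσ+1)
        linarith
    have hKeq : K = kσ + 1 := hmax_unique hK (heq ▸ hp3)
    have heq2 : x - ((2:ℝ)^K)⁻¹ = σ := by rw [heq, hKeq]; ring
    rw [heq2]
    exact ⟨hσF, kσ, hkσ, by omega⟩
open Fus
theorem Fus.Dy.half {n : ℕ} {a : ℝ} (h : Fus.Dy n a) : Fus.Dy (n+1) (a/2) := by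
  obtain ⟨m, hm⟩ := h
  refine ⟨m, ?_⟩
  rw [pow_succ, ← hm]
  ring

/-- The gap part of the induction : nothing fusible in `(z, z + 2^{-(k+1)})`. -/
theorem gap_of_IH {z : ℝ} (hz : Fusible z)
    (IH : ∀ s : ℝ, Fusible s → s < z → Pack s)
    {k : ℕ} (hk : HMaxIs z k) (h0 : 0 < z) :
    ∀ w : ℝ, Fusible w → z < w → z + ((2:ℝ)^(k+1))⁻¹ ≤ w := by
  classical
  set WS := {w : ℝ | Fusible w ∧ z < w} with hWS
  have hWSwf : WS.IsWF := fusibleSet_isWF.mono (fun g hg => hg.1)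
  have hWSne : WS.Nonempty := ⟨z + 1/2, Fus.Fusible.add_half hz, by linarith⟩
  set w0 := hWSwf.min hWSne with hw0def
  obtain ⟨hw0F, hw0z⟩ := hWSwf.min_mem hWSne
  rw [← hw0def] at hw0F hw0z
  suffices hs : z + ((2:ℝ)^(k+1))⁻¹ ≤ w0 by
    intro w hw hzw
    exact le_trans hs (hWSwf.min_le hWSne ⟨hw, hzw⟩)
  by_contra hcon
  push_neg at hcon
  have hk1 : 1 ≤ k := hmax_pos hk h0
  have hDz : Dy k z := hmax_dy hk
  have hw0pos : 0 < w0 := lt_trans h0 hw0z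
  obtain ⟨x, y, hxF, hyF, hxy, hyx1, hwxy⟩ := fusible_decomp hw0F hw0pos
  have hyltw : y < w0 := by rw [hwxy]; linarith
  have hminle : ∀ v, Fusible v → z < v → w0 ≤ v :=
    fun v hv hzv => hWSwf.min_le hWSne ⟨hv, hzv⟩
  have hylez : y ≤ z := by
    by_contra hcon2
    push_neg at hcon2
    exact absurd (hminle y hyF hcon2) (not_le.2 hyltw)
  have esucc := inv_pow_succ k
  rcases eq_or_lt_of_le hylez with hyz | hyz
  · -- case y = z
    subst hyz
    have hxl : y - 1 < x := by linarith
    have hxu : x < y - 1 + ((2:ℝ)^k)⁻¹ := by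
      rw [hwxy] at hcon
      linarith
    rcases eq_or_lt_of_le (Fus.fusible_nonneg hxF) with hx0 | hx0
    · have hz1 : y < 1 := by linarith
      have := fusible_lt_one_le y hz k hk hz1
      linarith
    · obtain ⟨kx, hkx⟩ := hmax_exists x hxF
      have hxz : x < y := by
        have := inv_pow_le_one k
        linarith
      rcases le_or_gt kx k with hkxk | hkxk
      · have hD : Dy k (x - (y - 1)) := ((hmax_dy hkx).mono hkxk).sub (hDz.sub Dy.one)
        have := hD.nonneg_of_pos (by linarith)
        linarith
      · obtain ⟨huF, ku, hku, hkul⟩ := pred_of_IH IH hxF hx0 hxz hkx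
        set u := x - ((2:ℝ)^kx)⁻¹ with hudef
        clear_value u
        have h7 := inv_pow_pos kx
        have hcore : u ≤ y - 1 := by
          by_contra hcon3
          push_neg at hcon3
          have habs2 : |y - u| < 1 := by
            rw [abs_lt]
            constructor
            · simp only [hudef]; linarith
            · linarith
          have hvzF : Fusible ((u + y + 1)/2) := Fusible.fuse u y huF hz habs2
          have hgt : y < (u + y + 1)/2 := by linarith [hcon3]
          have hlt3 : (u + y + 1)/2 < w0 := by
            rw [hwxy]
            simp only [hudef]
            linarith
          exact absurd (hminle _ hvzF hgt) (not_le.2 hlt3)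
        have hDxk : Dy kx (x - (y - 1)) :=
          (hmax_dy hkx).sub ((hDz.mono (by omega)).sub Dy.one)
        have h3 := hDxk.nonneg_of_pos (by linarith)
        have hueq : u = y - 1 := by
          simp only [hudef] at hcore ⊢
          linarith
        have hkuz : HMaxIs (y-1) ku := hueq ▸ hku
        have hzz : HMaxIs ((y-1)+1) k := by
          have e : (y-1)+1 = y := by ring
          rw [e]
          exact hk
        have := hmax_add_two hkuz hzz
        omega
  · -- case y < z
    have hyx : x + y = 2*w0 - 1 := by rw [hwxy]; ring
    rcases eq_or_lt_of_le (Fus.fusible_nonneg hxF) with hx0 | hx0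
    · -- x = 0
      have hy2w : y = 2*w0 - 1 := by linarith
      have hz1 : z < 1 := by
        have h5 : 2*z - 1 < y := by rw [hy2w]; linarith
        linarith
      obtain ⟨k'', hk'', hmaxc, hfusc⟩ := hmax_lt_one h0 hz1 hk
      have hcz : 2*z - 1 < z := by linarith
      obtain ⟨-, hc2, -⟩ := IH (2*z-1) hfusc hcz k'' hmaxc
      have hyc : 2*z - 1 < y := by rw [hy2w]; linarith
      have h6 := hc2 y hyF hyc
      subst hk''
      have e1 := inv_pow_succ (k''+1)
      have e2 := inv_pow_succ k''
      rw [hwxy] at hcon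
      linarith
    · -- x > 0 , y > 0
      have hy0 : 0 < y := lt_of_lt_of_le hx0 hxy
      obtain ⟨kx, hkx⟩ := hmax_exists x hxF
      obtain ⟨ky, hky⟩ := hmax_exists y hyF
      have hxz : x < z := lt_of_le_of_lt hxy hyz
      rcases le_or_gt (max kx ky) (k-1) with hKle | hKgt
      · have hDd : Dy (k-1) (x + y - (2*z - 1)) := by
          have h1 : Dy (k-1) x := (hmax_dy hkx).mono (by omega)
          have h2 : Dy (k-1) y := (hmax_dy hky).mono (by omega)
          have h3 : Dy (k-1) (2*z) := by
            obtain ⟨m, hm⟩ := hDz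
            refine ⟨m, ?_⟩
            rw [← hm]
            have e : (2:ℝ)^k = 2 * 2^(k-1) := by
              rw [← pow_succ']
              congr 1
              omega
            rw [e]
            ring
          exact (h1.add h2).sub (h3.sub Dy.one)
        have h4 := hDd.nonneg_of_pos (by rw [hyx]; linarith)
        have e2 : ((2:ℝ)^k)⁻¹ < ((2:ℝ)^(k-1))⁻¹ := inv_pow_lt (by omega)
        rw [hyx] at h4
        linarith
      · set K := max kx ky with hKdef
        have hKk : k ≤ K := by omega
        have eK := inv_pow_succ K
        have hDxK : Dy K x := (hmax_dy hkx).mono (le_max_left _ _)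
        have hDyK : Dy K y := (hmax_dy hky).mono (le_max_right _ _)
        have hDzK : Dy K (2*z) := by
          obtain ⟨m, hm⟩ := hDz
          refine ⟨m * 2^(K - k + 1), ?_⟩
          push_cast
          have e : (2:ℝ)^K = 2^k * 2^(K-k) := by rw [← pow_add]; congr 1; omega
          rw [e, ← hm]
          have e2 : (2:ℝ)^(K - k + 1) = 2^(K-k) * 2 := by rw [pow_succ]
          rw [e2]
          ring
        have hDw0z : Dy (K+1) (w0 - z) := by
          have h1 : Dy K (x + y + 1 - 2*z) := ((hDxK.add hDyK).add Dy.one).sub hDzK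
          have h2 : w0 - z = (x + y + 1 - 2*z)/2 := by rw [hwxy]; ring
          rw [h2]
          exact h1.half
        have hkey : ∀ t0 : ℝ, Fusible t0 → t0 = w0 - ((2:ℝ)^(K+1))⁻¹ →
            w0 = z + ((2:ℝ)^(K+1))⁻¹ := by
          intro t0 ht0F ht0eq
          have ht0lt : t0 < w0 := by
            rw [ht0eq]
            have := inv_pow_pos (K+1)
            linarith
          rcases le_or_gt t0 z with hle | hlt2
          · have h5 : w0 - z ≤ ((2:ℝ)^(K+1))⁻¹ := by rw [ht0eq] at hle; linarith
            have h6 := hDw0z.nonneg_of_pos (by linarith : (0:ℝ) < w0 - z)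
            linarith
          · exact absurd (hminle t0 ht0F hlt2) (not_le.2 ht0lt)
        have hfinal : ∀ a b : ℝ, Fusible a → Fusible b → a + b = 2*z - 1 → |b - a| < 1 →
            ∀ ka kb : ℕ, HMaxIs a ka → HMaxIs b kb → K - 1 ≤ max ka kb →
            w0 = z + ((2:ℝ)^(K+1))⁻¹ → False := by
          intro a b haF hbF hab habs ka kb hka hkb hmaxab hw0eq
          obtain ⟨⟨ta, hta, htava, htah⟩, -⟩ := hka
          obtain ⟨⟨tb, htb, htbvb, htbh⟩, -⟩ := hkb
          have hnv : (RepTree.node ta tb).Valid := ⟨hta, htb, by rw [htava, htbvb]; exact habs⟩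
          have hnval : (RepTree.node ta tb).val = z := by
            simp only [RepTree.val, htava, htbvb]
            linarith
          have hht := hk.2 _ hnv hnval
          simp only [RepTree.height, htah, htbh] at hht
          have hKeqk : K = k := by omega
          rw [hKeqk] at hw0eq
          rw [hw0eq] at hcon
          exact absurd hcon (lt_irrefl _)
        rcases le_total kx ky with hxyk | hxyk
        · -- K = ky
          have hKy : K = ky := max_eq_right hxyk
          obtain ⟨hvF, kv, hkv, hkvl⟩ := pred_of_IH IH hyF hy0 hyz hky
          set v := y - ((2:ℝ)^ky)⁻¹ with hvdef
          clear_value v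
          have hky1 : 1 ≤ ky := hmax_pos hky hy0
          have hpv := inv_pow_pos ky
          have habsv : |v - x| < 1 := by
            rw [abs_lt]
            constructor
            · have h5 : ((2:ℝ)^ky)⁻¹ ≤ ((2:ℝ)^1)⁻¹ := inv_pow_le hky1
              simp only [hvdef]
              norm_num at h5
              linarith
            · simp only [hvdef]
              linarith
          have ht0F : Fusible ((x + v + 1)/2) := Fusible.fuse x v hxF hvF habsv
          rw [hKy] at eK
          have ht0eq : (x + v + 1)/2 = w0 - ((2:ℝ)^(K+1))⁻¹ := by
            rw [hKy, hwxy]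
            simp only [hvdef]
            linarith
          have hw0eq := hkey _ ht0F ht0eq
          have hsum2 : x + v = 2*z - 1 := by
            simp only [hvdef]
            rw [hw0eq, hKy] at hyx
            linarith
          exact hfinal x v hxF hvF hsum2 habsv kx kv hkx hkv (by omega) hw0eq
        · -- K = kx
          have hKx : K = kx := max_eq_left hxyk
          have hkx1 : 1 ≤ kx := hmax_pos hkx hx0
          obtain ⟨huF, ku, hku, hkul⟩ := pred_of_IH IH hxF hx0 hxz hkx
          set u := x - ((2:ℝ)^kx)⁻¹ with hudef
          clear_value u
          have hpu := inv_pow_pos kx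
          have hyxle : y - x ≤ 1 - ((2:ℝ)^K)⁻¹ := by
            have hD : Dy K (y - x) := hDyK.sub hDxK
            have := hD.gap (Dy.one (n := K)) (by linarith : y - x < 1)
            linarith
          have hne : y - x ≠ 1 - ((2:ℝ)^K)⁻¹ := by
            intro heq5
            have hyval : y = w0 - ((2:ℝ)^(K+1))⁻¹ := by
              have h8 : x = y - 1 + ((2:ℝ)^K)⁻¹ := by linarith
              linarith
            have hzy : 0 < z - y := by linarith
            have hzyu : z - y < ((2:ℝ)^(K+1))⁻¹ := by
              rw [hyval]
              linarith
            have hD : Dy K (z - y) := by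
              have h9 : Dy K z := hDz.mono hKk
              exact h9.sub hDyK
            have h10 := hD.nonneg_of_pos hzy
            have h11 := inv_pow_lt (Nat.lt_succ_self K)
            linarith
          have habsu : |y - u| < 1 := by
            rw [abs_lt]
            constructor
            · simp only [hudef]; linarith
            · have h5 : y - x < 1 - ((2:ℝ)^K)⁻¹ := lt_of_le_of_ne hyxle hne
              rw [hKx] at h5
              simp only [hudef]
              linarith
          have ht0F : Fusible ((u + y + 1)/2) := Fusible.fuse u y huF hyF habsu
          have eKx := inv_pow_succ kx
          have ht0eq : (u + y + 1)/2 = w0 - ((2:ℝ)^(K+1))⁻¹ := by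
            rw [hKx, hwxy]
            simp only [hudef]
            linarith
          have hw0eq := hkey _ ht0F ht0eq
          have hsum2 : u + y = 2*z - 1 := by
            simp only [hudef]
            rw [hw0eq, hKx] at hyx
            linarith
          exact hfinal u y huF hyF hsum2 habsu ku ky hku hky (by omega) hw0eq
open Fus in
theorem pack_step (z : ℝ) (hz : Fusible z)
    (IH : ∀ s : ℝ, Fusible s → s < z → Pack s) : Pack z := by
  classical
  intro k hk
  rcases eq_or_lt_of_le (Fus.fusible_nonneg hz) with h0 | h0
  · -- z = 0
    have hz0 : z = 0 := h0.symm
    subst hz0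
    have hk0 : k = 0 := hmax_unique hk hmax_zero
    subst hk0
    have hfhalf : Fusible ((0:ℝ) + ((2:ℝ)^(0+1))⁻¹) := by
      have h1 := Fusible.fuse 0 0 Fusible.zero Fusible.zero (by simp)
      have e : ((0:ℝ) + 0 + 1)/2 = (0:ℝ) + ((2:ℝ)^(0+1))⁻¹ := by norm_num
      rwa [e] at h1
    refine ⟨hfhalf, ?_, ?_, ?_⟩
    · intro w hw hzw
      have := Fus.fusible_half_le' hw (by linarith)
      norm_num
      linarith
    · refine ⟨RepTree.node RepTree.leaf RepTree.leaf, ⟨trivial, trivial, by simp [RepTree.val]⟩,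
        by norm_num [RepTree.val], rfl⟩
    · intro t hv hval
      cases t with
      | leaf =>
        exfalso
        simp only [RepTree.val] at hval
        norm_num at hval
      | node l r =>
        obtain ⟨hvl, hvr, -⟩ := hv
        have hsum : l.val + r.val = 0 := by
          simp only [RepTree.val] at hval
          norm_num at hval
          linarith
        have hl0 : l.val = 0 := le_antisymm (by linarith [Fus.val_nonneg r]) (Fus.val_nonneg l)
        have hr0 : r.val = 0 := by linarith [Fus.val_nonneg l]
        rw [Fus.eq_leaf_of_val_eq_zero hl0, Fus.eq_leaf_of_val_eq_zero hr0]
        simp [RepTree.height]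
  · -- z > 0
    obtain ⟨e, f, k', kf, hkk', heF, hfF, hsum, habs, hez, hfz, hke, hkf, hkfk'⟩ :=
      exists_child_pair h0 hk
    subst hkk'
    have hDe : Dy k' e := hmax_dy hke
    have hDf : Dy k' f := (hmax_dy hkf).mono hkfk'
    have hef_le : e - f ≤ 1 - ((2:ℝ)^k')⁻¹ := by
      have h2 : e - f < 1 := by have := (abs_lt.1 habs).1; linarith
      have := (hDe.sub hDf).gap (Dy.one (n := k')) h2
      linarith
    obtain ⟨heS, heG, heH⟩ := IH e heF hez k' hke
    have hep1 := inv_pow_succ k'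
    have hep2 := inv_pow_succ (k'+1)
    have hpp1 := inv_pow_pos (k'+1)
    have hpp2 := inv_pow_pos (k'+2)
    have habs2 : |f - (e + ((2:ℝ)^(k'+1))⁻¹)| < 1 := by
      rw [abs_lt]
      constructor
      · linarith
      · have := (abs_lt.1 habs).2
        linarith
    have hzval : (e + f + 1)/2 = z := by linarith
    have hSval : ((e + ((2:ℝ)^(k'+1))⁻¹) + f + 1)/2 = z + ((2:ℝ)^(k'+1+1))⁻¹ := by
      linarith
    have hS : Fusible (z + ((2:ℝ)^(k'+1+1))⁻¹) := by
      have h1 := Fusible.fuse _ f heS hfF habs2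
      rwa [hSval] at h1
    have hG := gap_of_IH hz IH hk h0
    refine ⟨hS, hG, ?_, ?_⟩
    · -- witness tree of height k'+2
      obtain ⟨⟨te, hte, hteval, hteh⟩, -⟩ := heH
      obtain ⟨⟨tf, htf, htfval, htfh⟩, -⟩ := hkf
      refine ⟨RepTree.node te tf, ⟨hte, htf, ?_⟩, ?_, ?_⟩
      · rw [hteval, htfval]
        exact habs2
      · simp only [RepTree.val, hteval, htfval]
        exact hSval
      · simp only [RepTree.height, hteh, htfh]
        omega
    · -- upper bound on the heights of representations of z⁺
      have helper : ∀ x y : ℝ, Fusible x → Fusible y → x ≤ y → y - x < 1 →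
          x + y = 2*(z + ((2:ℝ)^(k'+1+1))⁻¹) - 1 →
          (∃ kx, HMaxIs x kx ∧ kx ≤ k'+1) ∧ (∃ ky, HMaxIs y ky ∧ ky ≤ k'+1) := by
        intro x y hxF hyF hxy hyx1 hsum2
        have hyzp : y < z + ((2:ℝ)^(k'+1+1))⁻¹ := by linarith
        have hylez : y ≤ z := by
          by_contra hc
          push_neg at hc
          have := hG y hyF hc
          linarith
        rcases eq_or_lt_of_le hylez with hyz2 | hyz2
        · -- y = z
          have hxval : x = z - 1 + ((2:ℝ)^(k'+1))⁻¹ := by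
            rw [hyz2] at hsum2
            linarith
          obtain ⟨kx, hkx⟩ := hmax_exists x hxF
          have hkxle : kx ≤ k'+1 := by
            by_contra hc
            push_neg at hc
            have hx0 : 0 < x := by
              rcases eq_or_lt_of_le (Fus.fusible_nonneg hxF) with h | h
              · exfalso
                have : kx = 0 := hmax_unique hkx (h ▸ hmax_zero)
                omega
              · exact h
            have hinvlt : ((2:ℝ)^(k'+1))⁻¹ < 1 := by
              have := inv_pow_lt (show 0 < k'+1 by omega)
              norm_num at this
              linarith
            have hxltz : x < z := by rw [hxval]; linarith
            obtain ⟨hv0F, kv0, hkv0, -⟩ := pred_of_IH IH hxF hx0 hxltz hkx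
            have hikx := inv_pow_pos kx
            have hikxlt : ((2:ℝ)^kx)⁻¹ < ((2:ℝ)^(k'+1))⁻¹ := inv_pow_lt hc
            have habs3 : |z - (x - ((2:ℝ)^kx)⁻¹)| < 1 := by
              rw [abs_lt]
              constructor
              · linarith
              · rw [hxval]; linarith
            have hfuse := Fusible.fuse _ z hv0F hz habs3
            have hgt : z < ((x - ((2:ℝ)^kx)⁻¹) + z + 1)/2 := by
              rw [hxval]; linarith
            have hlt : ((x - ((2:ℝ)^kx)⁻¹) + z + 1)/2 < z + ((2:ℝ)^(k'+1+1))⁻¹ := by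
              rw [hxval]; linarith
            have := hG _ hfuse hgt
            linarith
          refine ⟨⟨kx, hkx, hkxle⟩, ⟨k'+1, ?_, le_refl _⟩⟩
          rw [hyz2]
          exact hk
        · -- y < z
          have hy0 : 0 < y := by
            rcases eq_or_lt_of_le (Fus.fusible_nonneg hyF) with h | h
            · exfalso
              have hx00 : x = 0 := le_antisymm (by rw [h]; exact hxy) (Fus.fusible_nonneg hxF)
              rw [hx00, ← h] at hsum2
              have := Fus.fusible_half_le' hz h0
              linarith
            · exact h
          obtain ⟨ky, hky⟩ := hmax_exists y hyF
          rcases eq_or_lt_of_le (Fus.fusible_nonneg hxF) with hx0 | hx0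
          · -- x = 0
            have hkx0 : HMaxIs x 0 := by rw [← hx0]; exact hmax_zero
            rcases le_or_gt ky (k'+1) with hkyle | hkygt
            · exact ⟨⟨0, hkx0, by omega⟩, ⟨ky, hky, hkyle⟩⟩
            · exfalso
              obtain ⟨hvF, kv, hkv, -⟩ := pred_of_IH IH hyF hy0 hyz2 hky
              have hiky := inv_pow_pos ky
              have hikysucc := inv_pow_succ ky
              have hikylt : ((2:ℝ)^(ky+1))⁻¹ < ((2:ℝ)^(k'+1+1))⁻¹ := inv_pow_lt (by omega)
              have habs3 : |(y - ((2:ℝ)^ky)⁻¹) - x| < 1 := by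
                rw [abs_lt]
                constructor
                · have := Fus.fusible_nonneg hvF
                  linarith
                · linarith
              have hfuse := Fusible.fuse x _ hxF hvF habs3
              have hgt : z < (x + (y - ((2:ℝ)^ky)⁻¹) + 1)/2 := by linarith
              have hlt : (x + (y - ((2:ℝ)^ky)⁻¹) + 1)/2 < z + ((2:ℝ)^(k'+1+1))⁻¹ := by
                linarith
              have := hG _ hfuse hgt
              linarith
          · -- x > 0
            obtain ⟨kx, hkx⟩ := hmax_exists x hxF
            have hxz : x < z := lt_of_le_of_lt hxy hyz2
            rcases le_or_gt (max kx ky) (k'+1) with hKle | hKgt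
            · exact ⟨⟨kx, hkx, by omega⟩, ⟨ky, hky, by omega⟩⟩
            · exfalso
              rcases le_total kx ky with hxyk | hxyk
              · -- max = ky ≥ k'+2
                have hkygt : k'+1 < ky := by omega
                obtain ⟨hvF, kv, hkv, -⟩ := pred_of_IH IH hyF hy0 hyz2 hky
                have hiky := inv_pow_pos ky
                have hikysucc := inv_pow_succ ky
                have hikylt : ((2:ℝ)^(ky+1))⁻¹ < ((2:ℝ)^(k'+1+1))⁻¹ := inv_pow_lt (by omega)
                have hky1 : 1 ≤ ky := hmax_pos hky hy0
                have hikyle : ((2:ℝ)^ky)⁻¹ ≤ ((2:ℝ)^1)⁻¹ := inv_pow_le hky1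
                have habs3 : |(y - ((2:ℝ)^ky)⁻¹) - x| < 1 := by
                  rw [abs_lt]
                  constructor
                  · norm_num at hikyle
                    linarith
                  · linarith
                have hfuse := Fusible.fuse x _ hxF hvF habs3
                have hgt : z < (x + (y - ((2:ℝ)^ky)⁻¹) + 1)/2 := by linarith
                have hlt : (x + (y - ((2:ℝ)^ky)⁻¹) + 1)/2 < z + ((2:ℝ)^(k'+1+1))⁻¹ := by
                  linarith
                have := hG _ hfuse hgt
                linarith
              · -- max = kx ≥ k'+2
                have hkxgt : k'+1 < kx := by omega
                obtain ⟨huF, ku, hku, -⟩ := pred_of_IH IH hxF hx0 hxz hkx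
                have hikx := inv_pow_pos kx
                have hikxsucc := inv_pow_succ kx
                have hikxlt : ((2:ℝ)^(kx+1))⁻¹ < ((2:ℝ)^(k'+1+1))⁻¹ := inv_pow_lt (by omega)
                have hyxle : y - x ≤ 1 - ((2:ℝ)^kx)⁻¹ := by
                  have hD : Dy kx (y - x) := ((hmax_dy hky).mono (by omega)).sub (hmax_dy hkx)
                  have := hD.gap (Dy.one (n := kx)) hyx1
                  linarith
                have hne : y - x ≠ 1 - ((2:ℝ)^kx)⁻¹ := by
                  intro heq5
                  -- then y = z⁺ - inv(kx+1) ∈ (z , z⁺) but y < z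
                  have : y = z + ((2:ℝ)^(k'+1+1))⁻¹ - ((2:ℝ)^(kx+1))⁻¹ := by linarith
                  linarith
                have habs3 : |y - (x - ((2:ℝ)^kx)⁻¹)| < 1 := by
                  rw [abs_lt]
                  constructor
                  · linarith
                  · have h5 : y - x < 1 - ((2:ℝ)^kx)⁻¹ := lt_of_le_of_ne hyxle hne
                    linarith
                have hfuse := Fusible.fuse _ y huF hyF habs3
                have hgt : z < ((x - ((2:ℝ)^kx)⁻¹) + y + 1)/2 := by linarith
                have hlt : ((x - ((2:ℝ)^kx)⁻¹) + y + 1)/2 < z + ((2:ℝ)^(k'+1+1))⁻¹ := by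
                  linarith
                have := hG _ hfuse hgt
                linarith
      intro t hv hval
      cases t with
      | leaf =>
        exfalso
        simp only [RepTree.val] at hval
        linarith
      | node l r =>
        obtain ⟨hvl, hvr, hlr⟩ := hv
        have hsum2 : l.val + r.val = 2*(z + ((2:ℝ)^(k'+1+1))⁻¹) - 1 := by
          simp only [RepTree.val] at hval
          linarith
        rcases le_total l.val r.val with hor | hor
        · obtain ⟨⟨kl, hkl, hkl'⟩, ⟨kr, hkr, hkr'⟩⟩ := helper l.val r.val
            (Fus.fusible_val hvl) (Fus.fusible_val hvr) hor (abs_lt.1 hlr).2 hsum2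
          have h1 : l.height ≤ kl := hkl.2 l hvl rfl
          have h2 : r.height ≤ kr := hkr.2 r hvr rfl
          simp only [RepTree.height]
          omega
        · obtain ⟨⟨kr, hkr, hkr'⟩, ⟨kl, hkl, hkl'⟩⟩ := helper r.val l.val
            (Fus.fusible_val hvr) (Fus.fusible_val hvl) hor
            (by rw [abs_sub_comm] at hlr; exact (abs_lt.1 hlr).2) (by linarith)
          have h1 : l.height ≤ kl := hkl.2 l hvl rfl
          have h2 : r.height ≤ kr := hkr.2 r hvr rfl
          simp only [RepTree.height]
          omega
theorem pack_all : ∀ z : ℝ, Fusible z → Pack z := by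
  intro z hz
  refine Set.WellFoundedOn.induction (P := Pack) fusibleSet_isWF (x := z) hz ?_
  intro y hy IH
  exact pack_step y hy (fun s hs hsy => IH s hs hsy)


theorem succ_of_hmax (z : ℝ) (n : ℕ) (hz : Fusible z) (hmax : HMaxIs z n) :
    IsLeast {w : ℝ | Fusible w ∧ z < w} (z + 1 / 2 ^ (n + 1)) ∧
    HMaxIs (z + 1 / 2 ^ (n + 1)) (n + 1) := by
  obtain ⟨h1, h2, h3⟩ := pack_all z hz n hmax
  have e : z + 1 / 2 ^ (n + 1) = z + ((2:ℝ)^(n+1))⁻¹ := by rw [one_div]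
  rw [e]
  refine ⟨⟨⟨h1, ?_⟩, ?_⟩, h3⟩
  · have := inv_pow_pos (n+1)
    linarith
  · rintro w ⟨hw, hzw⟩
    exact h2 w hw hzw
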